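/- The spatial part of R_v (the lower-right 3×3 block of the rotation matrix R_v used in radarization) is an orthogonal matrix, i.e., its columns are orthonormal, for any v ∈ ℝ³ with v_y ≠ 0 or v_z ≠ 0. -/

import Mathlib

set_option maxHeartbeats 1000000


noncomputable section

/-- The rotation matrix `R_v` of the radarization construction (in the case
`v_y ≠ 0` or `v_z ≠ 0`). -/
def rotMatrix (vx vy vz : ℝ) : Matrix (Fin 4) (Fin 4) ℝ :=
  (Real.sqrt (vx^2 + vy^2 + vz^2))⁻¹ •
    ![![Real.sqrt (vx^2 + vy^2 + vz^2), 0, 0, 0],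
      ![0, -vx, -vy, -vz],
      ![0, vy, -vx - vz^2 * (Real.sqrt (vx^2 + vy^2 + vz^2) - vx) / (vy^2 + vz^2),
        vy * vz * (Real.sqrt (vx^2 + vy^2 + vz^2) - vx) / (vy^2 + vz^2)],
      ![0, vz, vy * vz * (Real.sqrt (vx^2 + vy^2 + vz^2) - vx) / (vy^2 + vz^2),
        -vx - vy^2 * (Real.sqrt (vx^2 + vy^2 + vz^2) - vx) / (vy^2 + vz^2)]]

/-- The spatial (lower-right `3 × 3`) block of `R_v`. -/
def rotSpatial (vx vy vz : ℝ) : Matrix (Fin 3) (Fin 3) ℝ :=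
  Matrix.of fun i j : Fin 3 => rotMatrix vx vy vz i.succ j.succ

/-- The spatial part of `R_v` is an orthogonal matrix: its columns are
orthonormal. -/
theorem rotSpatial_orthogonal (vx vy vz : ℝ) (h : vy ≠ 0 ∨ vz ≠ 0) :
    (rotSpatial vx vy vz).transpose * rotSpatial vx vy vz = 1 := by
  have hs : (0:ℝ) < vy^2 + vz^2 := by
    rcases h with h | h
    · nlinarith [sq_nonneg vz, pow_pos (abs_pos.mpr h) 2, sq_abs vy]
    · nlinarith [sq_nonneg vy, pow_pos (abs_pos.mpr h) 2, sq_abs vz]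
  have hs' : vy^2 + vz^2 ≠ 0 := ne_of_gt hs
  have hpos : (0:ℝ) < vx^2 + vy^2 + vz^2 := by nlinarith [sq_nonneg vx]
  have hn : (0:ℝ) < Real.sqrt (vx^2 + vy^2 + vz^2) := Real.sqrt_pos.mpr hpos
  have hn2 : Real.sqrt (vx^2 + vy^2 + vz^2) ^ 2 = vx^2 + vy^2 + vz^2 :=
    Real.sq_sqrt hpos.le
  set n := Real.sqrt (vx^2 + vy^2 + vz^2) with hndef
  have hn' : n ≠ 0 := ne_of_gt hn
  have key : rotSpatial vx vy vz = n⁻¹ • Matrix.of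
      ![![-vx, -vy, -vz],
        ![vy, -vx - vz^2 * (n - vx) / (vy^2 + vz^2), vy * vz * (n - vx) / (vy^2 + vz^2)],
        ![vz, vy * vz * (n - vx) / (vy^2 + vz^2), -vx - vy^2 * (n - vx) / (vy^2 + vz^2)]] := by
    ext i j
    fin_cases i <;> fin_cases j <;> rfl
  rw [key]
  clear key hndef
  clear_value n
  ext i j
  fin_cases i <;> fin_cases j <;>
    simp [Matrix.mul_apply, Fin.sum_univ_three, Matrix.one_apply,
      Matrix.transpose_apply, Matrix.smul_apply] <;>
    field_simp <;>
    first
      | nlinarith [hn2, hn, sq_nonneg (n - vx)]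
      | linear_combination (-(vy^2*(vy^2+vz^2))) * hn2
      | linear_combination (-(vy*vz*(vy^2+vz^2))) * hn2
      | linear_combination (-(vz^2*(vy^2+vz^2))) * hn2
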